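/- Work in the polynomial ring ℂ[z₁,z₂] with integers K > M and N ≥ 3, and assume M ≥ 3. Let F₁ = z₁^M, F₂ = z₂^N + z₂z₁^K, g = J(F₁,F₂), and let J₁ be the ideal of ℂ[z₁,z₂] generated by g, J(F₁,g), and J(F₂,g). Then J₁ is contained in the principal ideal generated by z₁, and the radical of J₁ equals the principal prime ideal (z₁). -/

import Mathlib

open MvPolynomial

/-- The Jacobian determinant `J(f,h) = (∂f/∂z₁)(∂h/∂z₂) − (∂f/∂z₂)(∂h/∂z₁)`
of two polynomials in `ℂ[z₁,z₂]`. -/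
noncomputable def Jac (f h : MvPolynomial (Fin 2) ℂ) : MvPolynomial (Fin 2) ℂ :=
  pderiv 0 f * pderiv 1 h - pderiv 1 f * pderiv 0 h

lemma pderiv_three' (i : Fin 2) : pderiv i (3 : MvPolynomial (Fin 2) ℂ) = 0 := by
  simpa using Derivation.map_natCast (pderiv i) (A := MvPolynomial (Fin 2) ℂ) 3

lemma prime_X0 : Prime (X 0 : MvPolynomial (Fin 2) ℂ) := by
  rw [← MulEquiv.prime_iff (finSuccEquiv ℂ 1).toMulEquiv]
  simpa [finSuccEquiv_X_zero] using
    (Polynomial.prime_X (R := MvPolynomial (Fin 1) ℂ))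

lemma dvd_pderiv_of_sq_dvd {g : MvPolynomial (Fin 2) ℂ} (i : Fin 2)
    (h : ∃ p, g = X 0 ^ 2 * p) : (X 0 : MvPolynomial (Fin 2) ℂ) ∣ pderiv i g := by
  obtain ⟨p, rfl⟩ := h
  rw [pderiv_mul]
  refine dvd_add (dvd_mul_of_dvd_left ?_ p)
    (dvd_mul_of_dvd_left (dvd_pow_self _ two_ne_zero) _)
  rw [pderiv_pow]
  exact ⟨2 * pderiv i (X 0), by ring⟩

/-- **§4.2 of the paper.**  For the Catlin–D'Angelo example `F₁ = z₁^M`,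
`F₂ = z₂^N + z₂ z₁^K` with `K > M ≥ 3` and `N ≥ 3`, the ideal
`J₁ = (g, J(F₁,g), J(F₂,g))` (with `g = J(F₁,F₂)`) is contained in the principal
ideal `(z₁)`, and the radical of `J₁` equals `(z₁)`. -/
theorem catlin_dangelo_radical_J1_eq
    (M N K : ℕ) (hM : 3 ≤ M) (hN : 3 ≤ N) (hK : M < K)
    (F₁ F₂ g : MvPolynomial (Fin 2) ℂ)
    (hF₁ : F₁ = X 0 ^ M)
    (hF₂ : F₂ = X 1 ^ N + X 1 * X 0 ^ K)
    (hg : g = Jac F₁ F₂)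
    (J₁ : Ideal (MvPolynomial (Fin 2) ℂ))
    (hJ₁ : J₁ = Ideal.span {g, Jac F₁ g, Jac F₂ g}) :
    J₁ ≤ Ideal.span {X 0} ∧ J₁.radical = Ideal.span {X 0} := by
  obtain ⟨m, rfl⟩ : ∃ m, M = m + 3 := ⟨M - 3, by omega⟩
  obtain ⟨n, rfl⟩ : ∃ n, N = n + 3 := ⟨N - 3, by omega⟩
  obtain ⟨k, rfl⟩ : ∃ k, K = m + k + 4 := ⟨K - m - 4, by omega⟩
  -- explicit formula for g
  have hgE : g = ((m + 3 : ℕ) : MvPolynomial (Fin 2) ℂ) * X 0 ^ (m + 2) *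
      (((n + 3 : ℕ) : MvPolynomial (Fin 2) ℂ) * X 1 ^ (n + 2) + X 0 ^ (m + k + 4)) := by
    rw [hg, hF₁, hF₂]
    simp [Jac, pderiv_pow, pderiv_mul, Derivation.map_natCast, pderiv_three']
  -- explicit formula for Jac F₁ g
  have hJF1E : Jac F₁ g =
      (((m + 3) ^ 2 * (n + 3) * (n + 2) : ℕ) : MvPolynomial (Fin 2) ℂ) *
        X 0 ^ (2 * m + 4) * X 1 ^ (n + 1) := by
    rw [hF₁, hgE]
    simp [Jac, pderiv_pow, pderiv_mul, Derivation.map_natCast, pderiv_three']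
    push_cast
    ring
  have hsq : ∃ p, g = X 0 ^ 2 * p :=
    ⟨((m + 3 : ℕ) : MvPolynomial (Fin 2) ℂ) * X 0 ^ m *
      (((n + 3 : ℕ) : MvPolynomial (Fin 2) ℂ) * X 1 ^ (n + 2) + X 0 ^ (m + k + 4)),
      by rw [hgE]; ring⟩
  have hF2d : pderiv 0 F₂ =
      ((m + k + 4 : ℕ) : MvPolynomial (Fin 2) ℂ) * X 1 * X 0 ^ (m + k + 3) := by
    rw [hF₂]
    simp [pderiv_pow, pderiv_mul]
    ring
  -- divisibility of the three generators by X 0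
  have hdg : (X 0 : MvPolynomial (Fin 2) ℂ) ∣ g := by
    obtain ⟨p, hp⟩ := hsq; exact ⟨X 0 * p, by rw [hp]; ring⟩
  have hdJ1 : (X 0 : MvPolynomial (Fin 2) ℂ) ∣ Jac F₁ g := by
    rw [hJF1E]
    exact ⟨(((m + 3) ^ 2 * (n + 3) * (n + 2) : ℕ) : MvPolynomial (Fin 2) ℂ) *
      X 0 ^ (2 * m + 3) * X 1 ^ (n + 1), by ring⟩
  have hdJ2 : (X 0 : MvPolynomial (Fin 2) ℂ) ∣ Jac F₂ g := by
    refine dvd_sub (dvd_mul_of_dvd_left ?_ _)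
      (dvd_mul_of_dvd_right (dvd_pderiv_of_sq_dvd 0 hsq) _)
    rw [hF2d]
    exact ⟨((m + k + 4 : ℕ) : MvPolynomial (Fin 2) ℂ) * X 1 * X 0 ^ (m + k + 2), by ring⟩
  -- J₁ ≤ (X 0)
  have hle : J₁ ≤ Ideal.span {X 0} := by
    rw [hJ₁, Ideal.span_le]
    intro x hx
    simp only [Set.mem_insert_iff, Set.mem_singleton_iff] at hx
    rcases hx with rfl | rfl | rfl
    · exact Ideal.mem_span_singleton.2 hdg
    · exact Ideal.mem_span_singleton.2 hdJ1
    · exact Ideal.mem_span_singleton.2 hdJ2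
  refine ⟨hle, ?_⟩
  -- key: a power of X 0 lies in J₁
  have hgmem : g ∈ J₁ := by
    rw [hJ₁]; exact Ideal.subset_span (by simp)
  have hJ1mem : Jac F₁ g ∈ J₁ := by
    rw [hJ₁]; exact Ideal.subset_span (by simp)
  have key : (((m + 3) ^ 3 * (n + 2) : ℕ) : MvPolynomial (Fin 2) ℂ) * X 0 ^ (3 * m + k + 8)
      = (((m + 3) ^ 2 * (n + 2) : ℕ) : MvPolynomial (Fin 2) ℂ) * X 0 ^ (m + 2) * g
        - ((m + 3 : ℕ) : MvPolynomial (Fin 2) ℂ) * X 1 * Jac F₁ g := by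
    rw [hJF1E, hgE]
    push_cast
    ring
  have h1 : (((m + 3) ^ 3 * (n + 2) : ℕ) : MvPolynomial (Fin 2) ℂ)
      * X 0 ^ (3 * m + k + 8) ∈ J₁ := by
    rw [key]
    exact Ideal.sub_mem _ (Ideal.mul_mem_left _ _ hgmem) (Ideal.mul_mem_left _ _ hJ1mem)
  have hne : (((m + 3) ^ 3 * (n + 2) : ℕ) : ℂ) ≠ 0 := by
    exact Nat.cast_ne_zero.2 (by positivity)
  have hxpow : (X 0 : MvPolynomial (Fin 2) ℂ) ^ (3 * m + k + 8) ∈ J₁ := by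
    have hC : (((m + 3) ^ 3 * (n + 2) : ℕ) : MvPolynomial (Fin 2) ℂ)
        = C (((m + 3) ^ 3 * (n + 2) : ℕ) : ℂ) :=
      (map_natCast (C : ℂ →+* MvPolynomial (Fin 2) ℂ) _).symm
    have : (X 0 : MvPolynomial (Fin 2) ℂ) ^ (3 * m + k + 8)
        = C ((((m + 3) ^ 3 * (n + 2) : ℕ) : ℂ))⁻¹ *
          ((((m + 3) ^ 3 * (n + 2) : ℕ) : MvPolynomial (Fin 2) ℂ) * X 0 ^ (3 * m + k + 8)) := by
      rw [hC, ← mul_assoc, ← C_mul, inv_mul_cancel₀ hne, C_1, one_mul]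
    rw [this]
    exact Ideal.mul_mem_left _ _ h1
  -- radical equality
  have hspan_prime : (Ideal.span {(X 0 : MvPolynomial (Fin 2) ℂ)}).IsPrime :=
    (Ideal.span_singleton_prime prime_X0.ne_zero).2 prime_X0
  refine le_antisymm ?_ ?_
  · rw [← hspan_prime.radical]
    exact Ideal.radical_mono hle
  · rw [Ideal.span_le]
    intro x hx
    simp only [Set.mem_singleton_iff] at hx
    subst hx
    exact ⟨3 * m + k + 8, hxpow⟩
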